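/- Let G be a finitely generated group with uniformly undistorted cyclic subgroups, meaning there is c > 0 such that the translation length τ(g) = lim l_S(gⁿ)/n satisfies τ(g) ≥ c for every infinite order element g. Then every finitely generated abelian subgroup A of G is undistorted in G: there is k > 0 such that l_A(a) ≤ (1/k)·l_S(a) for all a ∈ A, where l_A is word length with respect to a finite generating set of A. -/

import Mathlib

set_option maxHeartbeats 1000000


open Filter

/-- Word length with respect to a generating set `S` (using letters from
`S ∪ S⁻¹`). -/
noncomputable def wordLength {G : Type*} [Group G] (S : Set G) (g : G) : ℕ :=
  sInf {n | ∃ l : List G, l.length = n ∧ (∀ x ∈ l, x ∈ S ∨ x⁻¹ ∈ S) ∧ l.prod = g}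

section WL
variable {G : Type*} [Group G] {S : Set G}

lemma wordLength_le {g : G} {n : ℕ}
    (h : ∃ l : List G, l.length = n ∧ (∀ x ∈ l, x ∈ S ∨ x⁻¹ ∈ S) ∧ l.prod = g) :
    wordLength S g ≤ n := Nat.sInf_le h

lemma wordLength_one : wordLength S (1 : G) = 0 :=
  Nat.eq_zero_of_le_zero (wordLength_le ⟨[], rfl, by simp, rfl⟩)

lemma wordLength_spec (hgen : Subgroup.closure S = ⊤) (g : G) :
    ∃ l : List G, l.length = wordLength S g ∧ (∀ x ∈ l, x ∈ S ∨ x⁻¹ ∈ S) ∧ l.prod = g := by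
  have hg : g ∈ Submonoid.closure (S ∪ S⁻¹) := by
    rw [← Subgroup.closure_toSubmonoid]
    simp [hgen]
  obtain ⟨l, hl, hp⟩ := Submonoid.exists_list_of_mem_closure hg
  have hne : {n | ∃ l : List G, l.length = n ∧ (∀ x ∈ l, x ∈ S ∨ x⁻¹ ∈ S) ∧ l.prod = g}.Nonempty :=
    ⟨l.length, l, rfl, fun x hx => by
      rcases hl x hx with h | h
      · exact Or.inl h
      · exact Or.inr (Set.mem_inv.mp h), hp⟩
  exact Nat.sInf_mem hne

lemma wordLength_pos (hgen : Subgroup.closure S = ⊤) {g : G} (hg : g ≠ 1) :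
    1 ≤ wordLength S g := by
  rcases Nat.eq_zero_or_pos (wordLength S g) with h | h
  swap
  · exact h
  · obtain ⟨l, hl, -, hp⟩ := wordLength_spec hgen g
    rw [h, List.length_eq_zero_iff] at hl
    exact absurd (by simpa [hl] using hp.symm) hg

lemma wordLength_mul (hgen : Subgroup.closure S = ⊤) (g h : G) :
    wordLength S (g * h) ≤ wordLength S g + wordLength S h := by
  obtain ⟨l1, h1, m1, p1⟩ := wordLength_spec hgen g
  obtain ⟨l2, h2, m2, p2⟩ := wordLength_spec hgen h
  exact wordLength_le ⟨l1 ++ l2, by simp [h1, h2], fun x hx => by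
    rcases List.mem_append.mp hx with h | h
    · exact m1 x h
    · exact m2 x h, by simp [p1, p2]⟩

lemma wordLength_inv (hgen : Subgroup.closure S = ⊤) (g : G) :
    wordLength S g⁻¹ = wordLength S g := by
  have key : ∀ x : G, wordLength S x⁻¹ ≤ wordLength S x := by
    intro x
    obtain ⟨l, hl, m, p⟩ := wordLength_spec hgen x
    refine wordLength_le ⟨(l.map (·⁻¹)).reverse, by simp [hl], fun y hy => ?_, ?_⟩
    · simp only [List.mem_reverse, List.mem_map] at hy
      obtain ⟨z, hz, rfl⟩ := hy
      rcases m z hz with h | h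
      · exact Or.inr (by simpa using h)
      · exact Or.inl h
    · rw [← p, ← List.prod_inv_reverse]
  exact le_antisymm (key g) (by simpa using key g⁻¹)

lemma wordLength_pow (hgen : Subgroup.closure S = ⊤) (g : G) (n : ℕ) :
    wordLength S (g ^ n) ≤ n * wordLength S g := by
  induction n with
  | zero => simp [wordLength_one]
  | succ n ih =>
    calc wordLength S (g ^ (n + 1)) ≤ wordLength S (g ^ n) + wordLength S g := by
          rw [pow_succ]; exact wordLength_mul hgen _ _
    _ ≤ n * wordLength S g + wordLength S g := by omega
    _ = (n + 1) * wordLength S g := by ring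

end WL

lemma wordLength_prod {G : Type*} [CommGroup G] {S : Set G} (hgen : Subgroup.closure S = ⊤)
    {ι : Type*} (s : Finset ι) (f : ι → G) :
    wordLength S (∏ i ∈ s, f i) ≤ ∑ i ∈ s, wordLength S (f i) := by
  classical
  induction s using Finset.cons_induction with
  | empty => simp [wordLength_one]
  | cons a s ha ih =>
    rw [Finset.prod_cons, Finset.sum_cons]
    exact le_trans (wordLength_mul hgen _ _) (by omega)

section Tau
variable {G : Type*} [Group G] {S : Set G} (hgen : Subgroup.closure S = ⊤)
  (tau : G → ℝ)
  (htau : ∀ g : G, Tendsto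
      (fun n : ℕ => (wordLength S (g ^ n) : ℝ) / n) atTop (nhds (tau g)))

include hgen htau

lemma tau_nonneg (g : G) : 0 ≤ tau g :=
  ge_of_tendsto' (htau g) fun n => by positivity

lemma tau_le_wordLength (g : G) : tau g ≤ wordLength S g := by
  refine le_of_tendsto (htau g) (eventually_atTop.mpr ⟨1, fun n hn => ?_⟩)
  rw [div_le_iff₀ (by positivity)]
  calc (wordLength S (g ^ n) : ℝ) ≤ (n * wordLength S g : ℕ) := by
        exact_mod_cast wordLength_pow hgen g n
  _ = (wordLength S g : ℝ) * n := by push_cast; ring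

lemma tau_one : tau (1 : G) = 0 := by
  refine tendsto_nhds_unique (htau 1) ?_
  have : (fun n : ℕ => (wordLength S ((1:G) ^ n) : ℝ) / n) = fun _ => 0 := by
    funext n; simp [wordLength_one]
  rw [this]; exact tendsto_const_nhds

lemma tau_pow (g : G) (m : ℕ) : tau (g ^ m) = m * tau g := by
  rcases Nat.eq_zero_or_pos m with rfl | hm
  · simp [tau_one hgen tau htau]
  have hmul : Tendsto (fun n : ℕ => m * n) atTop atTop :=
    tendsto_atTop_atTop.mpr fun b => ⟨b, fun a ha => le_trans ha (Nat.le_mul_of_pos_left a hm)⟩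
  have h0 : Tendsto (fun n : ℕ => (wordLength S (g ^ (m * n)) : ℝ) / ((m * n : ℕ) : ℝ))
      atTop (nhds (tau g)) := (htau g).comp hmul
  have h1 := h0.const_mul (m : ℝ)
  refine tendsto_nhds_unique (htau (g ^ m)) (h1.congr' ?_)
  filter_upwards [eventually_gt_atTop 0] with n hn
  have hm' : (m : ℝ) ≠ 0 := Nat.cast_ne_zero.mpr hm.ne'
  have hn' : (n : ℝ) ≠ 0 := Nat.cast_ne_zero.mpr hn.ne'
  rw [← pow_mul]
  push_cast
  field_simp

lemma tau_inv (g : G) : tau g⁻¹ = tau g := by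
  refine tendsto_nhds_unique (htau g⁻¹) ((htau g).congr ?_)
  intro n
  rw [inv_pow, wordLength_inv hgen]

lemma tau_mul_le {a b : G} (h : a * b = b * a) : tau (a * b) ≤ tau a + tau b := by
  refine le_of_tendsto_of_tendsto' (htau (a * b)) ((htau a).add (htau b)) fun n => ?_
  rw [(Commute.mul_pow h n : (a*b)^n = a^n * b^n), ← add_div]
  gcongr
  exact_mod_cast wordLength_mul hgen _ _

end Tau


lemma lattice_core {r : ℕ} (N : (Fin r → ℤ) → ℝ)
    (h0 : N 0 = 0)
    (hadd : ∀ v w, N (v + w) ≤ N v + N w)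
    (hneg : ∀ v, N (-v) = N v)
    (hsmul : ∀ (m : ℕ) (v : Fin r → ℤ), N (m • v) = m * N v)
    (c : ℝ) (hc : 0 < c)
    (hlb : ∀ v : Fin r → ℤ, v ≠ 0 → c ≤ N v) :
    ∃ ε : ℝ, 0 < ε ∧ ∀ v : Fin r → ℤ,
      ε * ((Finset.univ.sup fun i => (v i).natAbs : ℕ) : ℝ) ≤ N v := by
  classical
  -- nonnegativity
  have hN0 : ∀ v, 0 ≤ N v := by
    intro v
    by_cases hv : v = 0
    · simp [hv, h0]
    · exact le_trans hc.le (hlb v hv)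
  -- integer homogeneity
  have habs : ∀ (k : ℤ) (v : Fin r → ℤ), N (k • v) = (k.natAbs : ℝ) * N v := by
    intro k v
    rcases Int.natAbs_eq k with hk | hk
    · conv_lhs => rw [hk]
      rw [natCast_zsmul, hsmul]
    · conv_lhs => rw [hk]
      rw [neg_zsmul, natCast_zsmul, hneg, hsmul]
  -- Lipschitz bound
  set B : ℝ := 1 + ∑ i : Fin r, N (Pi.single i 1) with hB
  have hBpos : 0 < B := by
    have : 0 ≤ ∑ i : Fin r, N (Pi.single i 1) := Finset.sum_nonneg fun i _ => hN0 _
    linarith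
  have hsingleB : ∀ i : Fin r, N (Pi.single i 1) ≤ B := by
    intro i
    have := Finset.single_le_sum (f := fun i : Fin r => N (Pi.single i 1))
      (fun i _ => hN0 _) (Finset.mem_univ i)
    linarith
  have hlip : ∀ w : Fin r → ℤ, N w ≤ (∑ i : Fin r, ((w i).natAbs : ℝ)) * B := by
    intro w
    have hw : w = ∑ i : Fin r, Pi.single i (w i) := (Finset.univ_sum_single w).symm
    have h1 : N w ≤ ∑ i : Fin r, N (Pi.single i (w i)) := by
      conv_lhs => rw [hw]
      exact Finset.le_sum_of_subadditive N h0.le hadd _ _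
    have h2 : ∀ i : Fin r, N (Pi.single i (w i)) ≤ ((w i).natAbs : ℝ) * B := by
      intro i
      have hps : Pi.single i (w i) = ((w i) • Pi.single i (1 : ℤ) : Fin r → ℤ) := by
        funext j
        by_cases hj : j = i
        · subst hj; simp
        · simp [Pi.single_apply, hj]
      rw [hps, habs]
      exact mul_le_mul_of_nonneg_left (hsingleB i) (by positivity)
    calc N w ≤ ∑ i : Fin r, N (Pi.single i (w i)) := h1
    _ ≤ ∑ i : Fin r, ((w i).natAbs : ℝ) * B := Finset.sum_le_sum fun i _ => h2 i
    _ = (∑ i : Fin r, ((w i).natAbs : ℝ)) * B := (Finset.sum_mul ..).symm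
  -- choice of Q
  set Q : ℕ := ⌈2 * B * r / c⌉₊ + 1 with hQdef
  have hQ1 : 1 ≤ Q := Nat.le_add_left 1 _
  have hQpos : (0 : ℝ) < Q := by exact_mod_cast hQ1
  have hQc : B * r / Q ≤ c / 2 := by
    have h1 : 2 * B * r / c ≤ Q := le_trans (Nat.le_ceil _) (by exact_mod_cast Nat.le_succ _)
    rw [div_le_div_iff₀ hQpos (by norm_num)]
    rw [div_le_iff₀ hc] at h1
    nlinarith
  refine ⟨c / (2 * Q ^ r), by positivity, ?_⟩
  intro v
  by_cases hv : v = 0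
  · subst hv
    have hsup : (Finset.univ.sup fun _ : Fin r => (0:ℕ)) = 0 :=
      Nat.le_antisymm (Finset.sup_le fun i _ => le_rfl) (Nat.zero_le _)
    simp [h0, hsup]
  -- setup
  set M : ℕ := Finset.univ.sup fun i => (v i).natAbs with hMdef
  obtain ⟨i₀, hi₀⟩ : ∃ i, v i ≠ 0 := Function.ne_iff.mp hv
  have hM1 : 1 ≤ M := le_trans (Int.natAbs_pos.mpr hi₀)
    (Finset.le_sup (f := fun i => (v i).natAbs) (Finset.mem_univ i₀))
  have hMZpos : (0 : ℤ) < (M : ℤ) := by exact_mod_cast hM1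
  have hMRpos : (0 : ℝ) < (M : ℝ) := by exact_mod_cast hM1
  -- pigeonhole
  have hbox : ∀ (j : ℕ) (i : Fin r), ((j : ℤ) * v i % M * Q / M).toNat < Q := by
    intro j i
    have ha0 : 0 ≤ (j : ℤ) * v i % M := Int.emod_nonneg _ hMZpos.ne'
    have haM : (j : ℤ) * v i % M < M := Int.emod_lt_of_pos _ hMZpos
    have hdiv : (j : ℤ) * v i % M * Q / M < Q := by
      rw [Int.ediv_lt_iff_lt_mul hMZpos]
      have : ((j : ℤ) * v i % M) * Q ≤ ((M : ℤ) - 1) * Q := by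
        apply mul_le_mul_of_nonneg_right _ (by positivity)
        omega
      have hQZ : (1:ℤ) ≤ (Q:ℤ) := by exact_mod_cast hQ1
      nlinarith [hQZ]
    have hdiv0 : 0 ≤ (j : ℤ) * v i % M * Q / M :=
      Int.ediv_nonneg (by positivity) hMZpos.le
    omega
  set F : Fin (Q ^ r + 1) → (Fin r → Fin Q) :=
    fun j i => ⟨((j : ℤ) * v i % M * Q / M).toNat, hbox j i⟩ with hF
  obtain ⟨x, y, hxy, hFxy⟩ : ∃ x y, x ≠ y ∧ F x = F y := by
    have hcard : Fintype.card (Fin r → Fin Q) < Fintype.card (Fin (Q ^ r + 1)) := by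
      simp [Fintype.card_fun]
    obtain ⟨x, y, hxy, h⟩ := Fintype.exists_ne_map_eq_of_card_lt F hcard
    exact ⟨x, y, hxy, h⟩
  -- order them
  have hxyval : (x : ℕ) ≠ (y : ℕ) := fun h => hxy (Fin.ext h)
  wlog hlt : (x : ℕ) < (y : ℕ) generalizing x y
  · exact this y x hxy.symm hFxy.symm (fun h => hxy (Fin.ext h.symm)) (by omega)
  set j : ℕ := (x : ℕ) with hjdef
  set l : ℕ := (y : ℕ) with hldef
  have hlQ : l ≤ Q ^ r := Nat.lt_succ_iff.mp y.isLt
  have hboxeq : ∀ i, ((j:ℤ) * v i % M * Q / M) = ((l:ℤ) * v i % M * Q / M) := by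
    intro i
    have h := congrArg (fun t : Fin r → Fin Q => ((t i : ℕ) : ℤ)) hFxy
    simp only [hF] at h
    have h0a : 0 ≤ (j:ℤ) * v i % M * Q / M :=
      Int.ediv_nonneg (mul_nonneg (Int.emod_nonneg _ hMZpos.ne') (by positivity)) hMZpos.le
    have h0b : 0 ≤ (l:ℤ) * v i % M * Q / M :=
      Int.ediv_nonneg (mul_nonneg (Int.emod_nonneg _ hMZpos.ne') (by positivity)) hMZpos.le
    rwa [Int.toNat_of_nonneg h0a, Int.toNat_of_nonneg h0b] at h
  set q : ℤ := (l : ℤ) - (j : ℤ) with hqdef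
  have hjl : (j : ℤ) < (l : ℤ) := by exact_mod_cast hlt
  have hq1 : 1 ≤ q := by omega
  have hqQ : (q.natAbs : ℝ) ≤ (Q : ℝ) ^ r := by
    have h1 : q.natAbs ≤ Q ^ r := by omega
    calc (q.natAbs : ℝ) ≤ ((Q ^ r : ℕ) : ℝ) := by exact_mod_cast h1
    _ = (Q : ℝ) ^ r := by push_cast; ring
  set p : Fin r → ℤ := fun i => (l:ℤ) * v i / M - (j:ℤ) * v i / M with hpdef
  set w : Fin r → ℤ := fun i => (l:ℤ) * v i % M - (j:ℤ) * v i % M with hwdef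
  have hid : ∀ i, q * v i = (M:ℤ) * p i + w i := by
    intro i
    have h1 := Int.mul_ediv_add_emod ((l:ℤ) * v i) M
    have h2 := Int.mul_ediv_add_emod ((j:ℤ) * v i) M
    simp only [hpdef, hwdef, hqdef]
    linear_combination h2 - h1
  have hQZ : (1:ℤ) ≤ (Q:ℤ) := by exact_mod_cast hQ1
  have hwbound : ∀ i, (Q:ℤ) * |w i| < M := by
    intro i
    have hbe := hboxeq i
    have h1 := Int.mul_ediv_add_emod (((j:ℤ) * v i % M) * Q) M
    have h2 := Int.mul_ediv_add_emod (((l:ℤ) * v i % M) * Q) M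
    have hs0 : 0 ≤ ((j:ℤ) * v i % M) * Q % M := Int.emod_nonneg _ hMZpos.ne'
    have hsM : ((j:ℤ) * v i % M) * Q % M < M := Int.emod_lt_of_pos _ hMZpos
    have ht0 : 0 ≤ ((l:ℤ) * v i % M) * Q % M := Int.emod_nonneg _ hMZpos.ne'
    have htM : ((l:ℤ) * v i % M) * Q % M < M := Int.emod_lt_of_pos _ hMZpos
    have hwq : w i * Q = ((l:ℤ) * v i % M) * Q % M - ((j:ℤ) * v i % M) * Q % M := by
      simp only [hwdef]
      rw [hbe] at h1
      linear_combination h1 - h2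
    have habs : |w i * Q| < M := by
      rw [hwq, abs_sub_lt_iff]
      constructor <;> linarith
    calc (Q:ℤ) * |w i| = |w i * Q| := by
          rw [abs_mul, abs_of_nonneg (by linarith : (0:ℤ) ≤ (Q:ℤ))]; ring
    _ < M := habs
  -- bound on N w
  have hNw : N w ≤ c / 2 * M := by
    have h1 : ∀ i, ((w i).natAbs : ℝ) ≤ (M : ℝ) / Q := by
      intro i
      have h2 : ((Q:ℤ) * |w i| : ℤ) ≤ (M:ℤ) := (hwbound i).le
      have h3 : (Q:ℝ) * |(w i : ℝ)| ≤ (M : ℝ) := by exact_mod_cast h2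
      rw [le_div_iff₀ hQpos]
      calc ((w i).natAbs : ℝ) * Q = |(w i : ℝ)| * Q := by
            rw [Nat.cast_natAbs]; push_cast; ring
      _ ≤ M := by linarith
    calc N w ≤ (∑ i : Fin r, ((w i).natAbs : ℝ)) * B := hlip w
    _ ≤ (∑ _i : Fin r, (M:ℝ) / Q) * B :=
        mul_le_mul_of_nonneg_right (Finset.sum_le_sum fun i _ => h1 i) hBpos.le
    _ = B * r / Q * M := by
        rw [Finset.sum_const, Finset.card_univ, Fintype.card_fin, nsmul_eq_mul]
        push_cast; field_simp [hQpos.ne']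
    _ ≤ c / 2 * M := mul_le_mul_of_nonneg_right hQc hMRpos.le
  -- main estimate
  have hvec : ((M:ℤ) • p : Fin r → ℤ) = q • v + (-w) := by
    funext i
    simp only [Pi.smul_apply, Pi.add_apply, Pi.neg_apply, smul_eq_mul]
    linear_combination - hid i
  have hNp : (M:ℝ) * N p ≤ (Q:ℝ) ^ r * N v + N w := by
    calc (M:ℝ) * N p = N ((M:ℤ) • p) := by
          rw [habs, Int.natAbs_cast]
    _ = N (q • v + (-w)) := by rw [hvec]
    _ ≤ N (q • v) + N (-w) := hadd _ _
    _ = (q.natAbs : ℝ) * N v + N w := by rw [habs, hneg]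
    _ ≤ (Q:ℝ) ^ r * N v + N w := by
        have := hN0 v
        nlinarith [hqQ]
  obtain ⟨i₁, -, hsupeq⟩ := Finset.exists_mem_eq_sup Finset.univ
    ⟨i₀, Finset.mem_univ i₀⟩ (fun i => (v i).natAbs)
  have hv1 : |v i₁| = (M : ℤ) := by
    rw [hMdef, hsupeq, Int.abs_eq_natAbs]
  clear hsupeq
  clear hFxy hboxeq hvec hF
  clear_value F j l
  clear hxy hxyval hlt hjdef hldef F x y hbox
  clear_value q p w M Q B
  clear hqdef hpdef hwdef hMdef hQdef hB hjl hlQ j l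
  by_cases hp : p = 0
  · exfalso
    have hid1 : q * v i₁ = w i₁ := by
      have := hid i₁
      rw [hp] at this
      simpa using this
    have hb1 : (Q:ℤ) * |w i₁| < M := hwbound i₁
    rw [← hid1, abs_mul, abs_of_nonneg (by linarith : (0:ℤ) ≤ q)] at hb1
    rw [hv1] at hb1
    have hQq : (1:ℤ) ≤ (Q:ℤ) * q := by nlinarith [hQZ, hq1]
    nlinarith [hQq, hMZpos]
  · have hcp : c ≤ N p := hlb p hp
    have hQr : (0:ℝ) < (Q:ℝ) ^ r := by positivity
    have h2Qr : (0:ℝ) < 2 * (Q:ℝ) ^ r := by linarith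
    rw [div_mul_eq_mul_div, div_le_iff₀ h2Qr]
    nlinarith [hNp, hNw, hcp, hMRpos]


/-- If `G` has uniformly undistorted cyclic subgroups (translation lengths of
infinite order elements are bounded below by some `c > 0`), then every
finitely generated abelian subgroup `A` of `G` is undistorted in `G`. -/
theorem abelian_subgroups_undistorted_of_uniformly_undistorted_cyclic
    {G : Type*} [Group G] (S : Finset G)
    (hgen : Subgroup.closure (S : Set G) = ⊤)
    (tau : G → ℝ)
    (htau : ∀ g : G, Tendsto
      (fun n : ℕ => (wordLength (S : Set G) (g ^ n) : ℝ) / n) atTop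
      (nhds (tau g)))
    (c : ℝ) (hc : 0 < c)
    (huniform : ∀ g : G, ¬ IsOfFinOrder g → c ≤ tau g)
    (A : Subgroup G) (hab : ∀ a ∈ A, ∀ b ∈ A, a * b = b * a)
    (hAfg : Group.FG A) :
    ∃ T : Finset A, Subgroup.closure (T : Set A) = ⊤ ∧
      ∃ k : ℝ, 0 < k ∧ ∀ a : A,
        (wordLength (T : Set A) a : ℝ) ≤ (1 / k) * wordLength (S : Set G) (a : G) := by
  classical
  letI instComm : CommGroup A :=
    { (inferInstance : Group A) with
      mul_comm := fun a b => Subtype.ext (hab a a.2 b b.2) }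
  haveI : Group.FG A := hAfg
  haveI hAddFG : AddGroup.FG (Additive A) := GroupFG.iff_add_fg.mp hAfg
  obtain ⟨n, ι, fι, pp, hpp, ee, ⟨e⟩⟩ :=
    AddCommGroup.equiv_free_prod_directSum_zmod (Additive A)
  haveI := fι
  haveI : ∀ i : ι, NeZero (pp i ^ ee i) :=
    fun i => ⟨pow_ne_zero _ (Nat.Prime.pos (hpp i)).ne'⟩
  set D := DirectSum ι (fun i => ZMod (pp i ^ ee i)) with hD
  haveI : Fintype D := DFinsupp.fintype
  -- the multiplicative isomorphism as a monoid hom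
  let Ψ : Multiplicative ((Fin n →₀ ℤ) × D) →* A :=
    MonoidHom.mk' (fun x => (e.symm x.toAdd).toMul)
      (fun x y => by
        show (e.symm ((x * y).toAdd)).toMul = _
        rw [toAdd_mul, map_add]
        rfl)
  have hΨinj : Function.Injective Ψ := by
    intro x y h
    have h2 := e.symm.injective (Additive.toMul.injective h)
    exact Multiplicative.toAdd.injective h2
  -- decomposition of an element of A
  let θ : A → (Fin n →₀ ℤ) × D := fun a => e (Additive.ofMul a)
  have haθ : ∀ a : A, Ψ (Multiplicative.ofAdd (θ a)) = a := by
    intro a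
    show (e.symm (Multiplicative.ofAdd (e (Additive.ofMul a))).toAdd).toMul = a
    rw [toAdd_ofAdd, AddEquiv.symm_apply_apply]
    rfl
  -- generators
  let gen : Fin n → A := fun i => Ψ (Multiplicative.ofAdd (Finsupp.single i 1, (0 : D)))
  let tor : D → A := fun d => Ψ (Multiplicative.ofAdd ((0 : Fin n →₀ ℤ), d))
  let T : Finset A := Finset.image gen Finset.univ ∪ Finset.image tor Finset.univ
  have hgenT : ∀ i, gen i ∈ T := fun i =>
    Finset.mem_union_left _ (Finset.mem_image_of_mem gen (Finset.mem_univ i))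
  have htorT : ∀ d, tor d ∈ T := fun d =>
    Finset.mem_union_right _ (Finset.mem_image_of_mem tor (Finset.mem_univ d))
  -- decomposition identity
  have hdecomp : ∀ (x : Fin n →₀ ℤ) (d : D),
      Ψ (Multiplicative.ofAdd (x, d)) = (∏ i : Fin n, gen i ^ (x i)) * tor d := by
    intro x d
    have h1 : (x, d) = (∑ i : Fin n, (x i) • (Finsupp.single i (1:ℤ), (0:D))) + (0, d) := by
      rw [Prod.ext_iff]
      constructor
      · simp [Prod.fst_sum, Finsupp.smul_single', Finsupp.univ_sum_single]
      · simp [Prod.snd_sum]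
    conv_lhs => rw [h1]
    rw [ofAdd_add, map_mul, ofAdd_sum, map_prod]
    congr 1
    refine Finset.prod_congr rfl fun i _ => ?_
    rw [ofAdd_zsmul, map_zpow]
  -- T generates A
  have hTgen : Subgroup.closure (T : Set A) = ⊤ := by
    rw [Subgroup.eq_top_iff']
    intro a
    rw [← haθ a, hdecomp]
    refine mul_mem ?_ (Subgroup.subset_closure (htorT _))
    exact prod_mem fun i _ => zpow_mem (Subgroup.subset_closure (hgenT i)) _
  -- upper bound for the word length in A
  have hwl_gen : ∀ (b : A), b ∈ T → ∀ (k : ℤ), wordLength (T : Set A) (b ^ k) ≤ k.natAbs := by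
    intro b hb k
    have h1 : wordLength (T : Set A) b ≤ 1 :=
      wordLength_le ⟨[b], rfl, fun x hx => Or.inl (by
        simp only [List.mem_singleton] at hx
        subst hx
        exact Finset.mem_coe.mpr hb), by simp⟩
    have key : ∀ m : ℕ, wordLength (T : Set A) (b ^ (m : ℤ)) ≤ m := by
      intro m
      rw [zpow_natCast]
      calc wordLength (T : Set A) (b ^ m) ≤ m * wordLength (T : Set A) b :=
            wordLength_pow hTgen b m
      _ ≤ m * 1 := Nat.mul_le_mul_left _ h1
      _ = m := Nat.mul_one _
    rcases Int.natAbs_eq k with hk | hk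
    · conv_lhs => rw [hk]
      exact key _
    · conv_lhs => rw [hk]
      rw [zpow_neg, wordLength_inv hTgen]
      exact key _
  have hupper : ∀ a : A, (wordLength (T : Set A) a : ℝ) ≤
      (∑ i : Fin n, (((θ a).1 i).natAbs : ℝ)) + 1 := by
    intro a
    have h1 : wordLength (T : Set A) a ≤ (∑ i : Fin n, ((θ a).1 i).natAbs) + 1 := by
      conv_lhs => rw [← haθ a]
      rcases hθa : θ a with ⟨x, d⟩
      rw [hdecomp]
      calc wordLength (T : Set A) ((∏ i : Fin n, gen i ^ (x i)) * tor d)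
          ≤ wordLength (T : Set A) (∏ i : Fin n, gen i ^ (x i))
            + wordLength (T : Set A) (tor d) := wordLength_mul hTgen _ _
      _ ≤ (∑ i : Fin n, (x i).natAbs) + 1 := by
          have h2 : wordLength (T : Set A) (∏ i : Fin n, gen i ^ (x i))
              ≤ ∑ i : Fin n, (x i).natAbs := by
            refine le_trans (wordLength_prod hTgen _ _) ?_
            exact Finset.sum_le_sum fun i _ => hwl_gen (gen i) (hgenT i) (x i)
          have h3 : wordLength (T : Set A) (tor d) ≤ 1 :=
            wordLength_le ⟨[tor d], rfl, fun y hy => Or.inl (by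
              simp only [List.mem_singleton] at hy
              subst hy
              exact Finset.mem_coe.mpr (htorT d)), by simp⟩
          omega
    calc (wordLength (T : Set A) a : ℝ)
        ≤ (((∑ i : Fin n, ((θ a).1 i).natAbs) + 1 : ℕ) : ℝ) := by exact_mod_cast h1
    _ = (∑ i : Fin n, (((θ a).1 i).natAbs : ℝ)) + 1 := by push_cast; ring
  -- the norm on the free lattice
  let E : (Fin n → ℤ) → (Fin n →₀ ℤ) := fun v => Finsupp.equivFunOnFinite.symm v
  have hE_apply : ∀ (v : Fin n → ℤ) (i : Fin n), E v i = v i := fun v i => rfl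
  let gfree : (Fin n →₀ ℤ) → G := fun x => ((Ψ (Multiplicative.ofAdd (x, (0:D))) : A) : G)
  let NN : (Fin n → ℤ) → ℝ := fun v => tau (gfree (E v))
  have hgfree_mul : ∀ x y : Fin n →₀ ℤ, gfree (x + y) = gfree x * gfree y := by
    intro x y
    show ((Ψ (Multiplicative.ofAdd ((x + y : _), (0:D))) : A) : G) = _
    have : ((x + y : Fin n →₀ ℤ), (0:D)) = (x, (0:D)) + (y, (0:D)) := by
      rw [Prod.ext_iff]; constructor <;> simp
    rw [this, ofAdd_add, map_mul]
    rfl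
  have hgfree_pow : ∀ (x : Fin n →₀ ℤ) (m : ℕ), gfree (m • x) = gfree x ^ m := by
    intro x m
    show ((Ψ (Multiplicative.ofAdd ((m • x : _), (0:D))) : A) : G) = _
    have : ((m • x : Fin n →₀ ℤ), (0:D)) = m • (x, (0:D)) := by
      rw [Prod.ext_iff]; constructor <;> simp
    rw [this, ofAdd_nsmul, map_pow]
    push_cast
    rfl
  have hgfree_neg : ∀ x : Fin n →₀ ℤ, gfree (-x) = (gfree x)⁻¹ := by
    intro x
    show ((Ψ (Multiplicative.ofAdd ((-x : _), (0:D))) : A) : G) = _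
    have : ((-x : Fin n →₀ ℤ), (0:D)) = -(x, (0:D)) := by
      rw [Prod.ext_iff]; constructor <;> simp
    rw [this, ofAdd_neg, map_inv]
    push_cast
    rfl
  have hgfree_one : gfree 0 = 1 := by
    show ((Ψ (Multiplicative.ofAdd ((0 : Fin n →₀ ℤ), (0:D))) : A) : G) = 1
    have : ((0 : Fin n →₀ ℤ), (0:D)) = (0 : (Fin n →₀ ℤ) × D) := rfl
    rw [this, ofAdd_zero, map_one]
    rfl
  have hgfree_inj : ∀ x : Fin n →₀ ℤ, gfree x = 1 → x = 0 := by
    intro x hx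
    have hx' : ((Ψ (Multiplicative.ofAdd (x, (0:D))) : A) : G) = 1 := hx
    have h1 : (Ψ (Multiplicative.ofAdd (x, (0:D))) : A) = 1 :=
      Subtype.ext (by simpa using hx')
    have h2 : Multiplicative.ofAdd (x, (0:D)) = Multiplicative.ofAdd (0 : (Fin n →₀ ℤ) × D) :=
      hΨinj (by rw [h1, ofAdd_zero, map_one])
    have h3 : (x, (0:D)) = (0 : (Fin n →₀ ℤ) × D) := Multiplicative.ofAdd.injective h2
    exact (Prod.ext_iff.mp h3).1
  -- properties of NN
  have hNN0 : NN 0 = 0 := by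
    show tau (gfree (E 0)) = 0
    have hE0 : E 0 = 0 := Finsupp.ext fun i => rfl
    rw [hE0, hgfree_one]
    exact tau_one hgen tau htau
  have hNNadd : ∀ v w : Fin n → ℤ, NN (v + w) ≤ NN v + NN w := by
    intro v w
    show tau (gfree (E (v + w))) ≤ tau (gfree (E v)) + tau (gfree (E w))
    have hEvw : E (v + w) = E v + E w := Finsupp.ext fun i => rfl
    rw [hEvw, hgfree_mul]
    exact tau_mul_le hgen tau htau
      (hab _ (Ψ (Multiplicative.ofAdd (E v, (0:D)))).2 _ (Ψ (Multiplicative.ofAdd (E w, (0:D)))).2)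
  have hNNneg : ∀ v : Fin n → ℤ, NN (-v) = NN v := by
    intro v
    show tau (gfree (E (-v))) = tau (gfree (E v))
    have hEv : E (-v) = -(E v) := Finsupp.ext fun i => rfl
    rw [hEv, hgfree_neg]
    exact tau_inv hgen tau htau _
  have hNNsmul : ∀ (m : ℕ) (v : Fin n → ℤ), NN (m • v) = m * NN v := by
    intro m v
    show tau (gfree (E (m • v))) = m * tau (gfree (E v))
    have hEv : E (m • v) = m • E v := Finsupp.ext fun i => rfl
    rw [hEv, hgfree_pow]
    exact tau_pow hgen tau htau _ m
  have hNNlb : ∀ v : Fin n → ℤ, v ≠ 0 → c ≤ NN v := by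
    intro v hv
    refine huniform _ fun hfin => hv ?_
    obtain ⟨m, hm0, hgm⟩ := isOfFinOrder_iff_pow_eq_one.mp hfin
    have h1 : gfree (m • E v) = 1 := by rw [hgfree_pow]; exact hgm
    have h2 : m • E v = 0 := hgfree_inj _ h1
    funext i
    have h3 : (m : ℤ) * v i = 0 := by
      have := congrArg (fun f : Fin n →₀ ℤ => f i) h2
      simpa [hE_apply] using this
    have hm0' : (m : ℤ) ≠ 0 := by exact_mod_cast hm0.ne'
    exact mul_left_cancel₀ hm0' (by simpa using h3)
  obtain ⟨ε, hε, hbound⟩ := lattice_core NN hNN0 hNNadd hNNneg hNNsmul c hc hNNlb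
  -- tau of an element equals NN of its free part
  have hfree : ∀ a : A, tau (a : G) = NN (fun i => (θ a).1 i) := by
    intro a
    set x := (θ a).1 with hx
    set d := (θ a).2 with hd
    set m := Fintype.card D with hm
    have hm1 : 0 < m := Fintype.card_pos
    have hEx : E (fun i => x i) = x := Finsupp.ext fun i => rfl
    have hpow : ∀ z : (Fin n →₀ ℤ) × D,
        Ψ (Multiplicative.ofAdd z) ^ m = Ψ (Multiplicative.ofAdd (m • z)) := by
      intro z
      rw [ofAdd_nsmul, map_pow]
    have ham : a ^ m = Ψ (Multiplicative.ofAdd (x, (0:D))) ^ m := by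
      conv_lhs => rw [← haθ a]
      rw [hpow, hpow]
      have hsm : m • (θ a) = m • (x, (0:D)) := by
        rw [show θ a = (x, d) from rfl, Prod.smul_mk, Prod.smul_mk, card_nsmul_eq_zero, smul_zero]
      rw [hsm]
    have h1 : tau ((a : G) ^ m) = m * tau (a : G) := tau_pow hgen tau htau _ m
    have h2 : tau ((a : G) ^ m) = m * tau (gfree x) := by
      rw [← SubmonoidClass.coe_pow, ham, SubmonoidClass.coe_pow]
      exact tau_pow hgen tau htau _ m
    have hm0' : (m : ℝ) ≠ 0 := by exact_mod_cast hm1.ne'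
    have h3 : tau (a : G) = tau (gfree x) := mul_left_cancel₀ hm0' (by rw [← h1, ← h2])
    show tau (a : G) = tau (gfree (E fun i => x i))
    rw [hEx, h3]
  -- final assembly
  have hki : (0:ℝ) < (n : ℝ) / ε + 1 := by
    have h7 : (0:ℝ) ≤ (n : ℝ) / ε := div_nonneg (Nat.cast_nonneg n) hε.le
    linarith
  refine ⟨T, hTgen, 1 / ((n : ℝ) / ε + 1), one_div_pos.mpr hki, ?_⟩
  intro a
  rw [one_div_one_div]
  by_cases ha1 : a = 1
  · subst ha1
    have h1 : ((1 : A) : G) = 1 := OneMemClass.coe_one A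
    rw [wordLength_one, h1, wordLength_one]
    norm_num
  · have hca1 : ((a : G)) ≠ 1 := fun h => ha1 (OneMemClass.coe_eq_one.mp h)
    have hW1 : (1 : ℝ) ≤ (wordLength (S : Set G) (a : G) : ℝ) := by
      exact_mod_cast wordLength_pos hgen hca1
    have htle : tau (a : G) ≤ (wordLength (S : Set G) (a : G) : ℝ) :=
      tau_le_wordLength hgen tau htau _
    have hNa : ε * ((Finset.univ.sup fun i => ((θ a).1 i).natAbs : ℕ) : ℝ) ≤ tau (a : G) := by
      rw [hfree a]
      exact hbound (fun i => (θ a).1 i)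
    have hsum : (∑ i : Fin n, (((θ a).1 i).natAbs : ℝ))
        ≤ (n : ℝ) * ((Finset.univ.sup fun i => ((θ a).1 i).natAbs : ℕ) : ℝ) := by
      have h4 : (∑ i : Fin n, ((θ a).1 i).natAbs)
          ≤ Finset.univ.card * (Finset.univ.sup fun i => ((θ a).1 i).natAbs) :=
        Finset.sum_le_card_nsmul Finset.univ _ _
          (fun i _ => Finset.le_sup (f := fun i => ((θ a).1 i).natAbs) (Finset.mem_univ i))
      rw [Finset.card_univ, Fintype.card_fin] at h4
      exact_mod_cast h4
    set W : ℝ := (wordLength (S : Set G) (a : G) : ℝ) with hW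
    set Msup : ℝ := ((Finset.univ.sup fun i => ((θ a).1 i).natAbs : ℕ) : ℝ) with hMsup
    have hMsup0 : 0 ≤ Msup := Nat.cast_nonneg _
    have h5 : (n : ℝ) / ε * (ε * Msup) ≤ (n : ℝ) / ε * W :=
      mul_le_mul_of_nonneg_left (le_trans hNa htle) (by positivity)
    have h6 : (n : ℝ) / ε * (ε * Msup) = (n : ℝ) * Msup := by
      field_simp
    calc (wordLength (T : Set A) a : ℝ)
        ≤ (∑ i : Fin n, (((θ a).1 i).natAbs : ℝ)) + 1 := hupper a
    _ ≤ (n : ℝ) * Msup + 1 := by linarith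
    _ ≤ (n : ℝ) / ε * W + W := by linarith
    _ = ((n : ℝ) / ε + 1) * W := by ring
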